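/- Let w_1, w_2 be words over B_n (or D_n) with factorizations w_1 = u_1 v_1, w_2 = u_2 v_2 such that l(u_1) = l(u_2) and l(v_1) = l(v_2). If w_1 and w_2 lie in the same connected component of the crystal graph G_n, then u_1 and u_2 lie in the same connected component, and v_1 and v_2 lie in the same connected component. -/

import Mathlib

/-- Rank of a letter of the alphabet `B_n = {1 ≺ ⋯ ≺ n ≺ 0 ≺ n̄ ≺ ⋯ ≺ 1̄}`,
where the letter `i` is encoded by the integer `i`, `0` by `0` and `ī` by `-i`. -/
def rankB (n : ℕ) (v : ℤ) : ℤ :=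
  if 0 < v then v else if v = 0 then (n : ℤ) + 1 else 2 * (n : ℤ) + 2 + v

/-- `C` is a column of type `B`: letters of `B_n`, strictly increasing from top to
bottom except that the letter `0` may repeat. -/
def IsColB (n : ℕ) (C : List ℤ) : Prop :=
  (∀ v ∈ C, v.natAbs ≤ n) ∧
  C.Chain' (fun a b => rankB n a < rankB n b ∨ (a = 0 ∧ b = 0))

/-- Rank of a letter of `D_n`; the letters `n` and `n̄` share the same rank
(they are incomparable). -/
def rankD (n : ℕ) (v : ℤ) : ℤ :=
  if 0 < v then v else 2 * (n : ℤ) + v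

/-- `C` is a column of type `D`: letters of `D_n` with `x_{i+1} ⋠ x_i`. -/
def IsColD (n : ℕ) (C : List ℤ) : Prop :=
  (∀ v ∈ C, 1 ≤ v.natAbs ∧ v.natAbs ≤ n) ∧
  C.Chain' (fun a b => rankD n a ≤ rankD n b ∧ a ≠ b)

/-- `N(z)`: the number of letters `x` of `C` with `x ⪯ z` or `x ⪰ z̄`,
for an unbarred letter `z`; these are exactly the nonzero letters of absolute
value at most `z`. -/
def Ncount (n : ℕ) (C : List ℤ) (z : ℤ) : ℕ :=
  (C.filter (fun v => decide (v ≠ 0 ∧ (v.natAbs : ℤ) ≤ z))).length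

/-- Kashiwara–Nakashima admissibility: height at most `n` and `N(z) ≤ z` for
every pair `(z, z̄)` with `z ⪯ n` unbarred occurring in `C`. -/
def Admissible (n : ℕ) (C : List ℤ) : Prop :=
  C.length ≤ n ∧
  ∀ z : ℤ, 1 ≤ z → z ≤ (n : ℤ) → z ∈ C → -z ∈ C → (Ncount n C z : ℤ) ≤ z
/-- Crystal operator `ẽ_i` on the vector crystal of `U_q(so_{2n+1})`:
`1 →¹ 2 → ⋯ → n →ⁿ 0 →ⁿ n̄ → ⋯ →¹ 1̄` (indices `1 ≤ i ≤ n`). -/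
def vE (n i : ℕ) (x : ℤ) : Option ℤ :=
  if i < n then
    if x = (i : ℤ) + 1 then some (i : ℤ)
    else if x = -(i : ℤ) then some (-((i : ℤ) + 1)) else none
  else
    if x = 0 then some (n : ℤ) else if x = -(n : ℤ) then some 0 else none

/-- Crystal operator `f̃_i` on the vector crystal of type `B`. -/
def vF (n i : ℕ) (x : ℤ) : Option ℤ :=
  if i < n then
    if x = (i : ℤ) then some ((i : ℤ) + 1)
    else if x = -((i : ℤ) + 1) then some (-(i : ℤ)) else none
  else
    if x = (n : ℤ) then some 0 else if x = 0 then some (-(n : ℤ)) else none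

/-- `ε_i` on the vector crystal of type `B`. -/
def vEps (n i : ℕ) (x : ℤ) : ℕ :=
  if i < n then (if x = (i : ℤ) + 1 ∨ x = -(i : ℤ) then 1 else 0)
  else (if x = 0 then 1 else if x = -(n : ℤ) then 2 else 0)

/-- `φ_i` on the vector crystal of type `B`. -/
def vPhi (n i : ℕ) (x : ℤ) : ℕ :=
  if i < n then (if x = (i : ℤ) ∨ x = -((i : ℤ) + 1) then 1 else 0)
  else (if x = (n : ℤ) then 2 else if x = 0 then 1 else 0)

/-- `ε_i` of a word `x₁ ⋯ x_l`, viewed as `x₁ ⊗ ⋯ ⊗ x_l`, via the tensor rule. -/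
def wEps (n i : ℕ) : List ℤ → ℕ
  | [] => 0
  | x :: w => if vPhi n i x < wEps n i w then wEps n i w + vEps n i x - vPhi n i x
              else vEps n i x

/-- `φ_i` of a word via the tensor rule. -/
def wPhi (n i : ℕ) : List ℤ → ℕ
  | [] => 0
  | x :: w => if wEps n i w < vPhi n i x then wPhi n i w + vPhi n i x - wEps n i w
              else wPhi n i w

/-- `f̃_i` on words (the crystal `G_n^B` of `⊕_l (V_n^B)^{⊗l}`). -/
def wF (n i : ℕ) : List ℤ → Option (List ℤ)
  | [] => none
  | x :: w => if wEps n i w < vPhi n i x then (vF n i x).map (· :: w)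
              else (wF n i w).map (x :: ·)

/-- `ẽ_i` on words. -/
def wE (n i : ℕ) : List ℤ → Option (List ℤ)
  | [] => none
  | x :: w => if vPhi n i x < wEps n i w then (wE n i w).map (x :: ·)
              else (vE n i x).map (· :: w)

/-- A word is a highest weight vertex when it is killed by all `ẽ_i`. -/
def HighestWt (n : ℕ) (w : List ℤ) : Prop :=
  ∀ i : ℕ, 1 ≤ i → i ≤ n → wE n i w = none

/-- Apply a sequence of lowering operators `f̃_{i₁}, …, f̃_{i_r}` to a word. -/
def applyF (n : ℕ) : List ℕ → List ℤ → Option (List ℤ)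
  | [], w => some w
  | i :: F, w => (wF n i w).bind (applyF n F)

/-- Two words occur at the same place in two isomorphic connected components of
the crystal of words: they are obtained from highest weight vertices by the
same sequence of lowering operators. -/
def SamePlace (n : ℕ) (w₁ w₂ : List ℤ) : Prop :=
  ∃ h₁ h₂ : List ℤ, ∃ F : List ℕ, HighestWt n h₁ ∧ HighestWt n h₂ ∧
    applyF n F h₁ = some w₁ ∧ applyF n F h₂ = some w₂

/-- Two words lie in the same connected component of the crystal of words. -/
def Conn (n : ℕ) : List ℤ → List ℤ → Prop :=
  Relation.EqvGen (fun a b => ∃ i : ℕ, 1 ≤ i ∧ i ≤ n ∧ wF n i a = some b)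

/-- The reading of a tabloid `T = C₁ ⋯ C_r` is `w(C_r) ⋯ w(C₁)`. -/
def readT (T : List (List ℤ)) : List ℤ := T.reverse.flatten

/-- A tabloid of type `B`: a filling of a Young diagram whose columns (given
from left to right, each read from top to bottom) are columns of type `B`. -/
def IsTabloidB (n : ℕ) (T : List (List ℤ)) : Prop :=
  (∀ C ∈ T, IsColB n C ∧ C ≠ []) ∧
  T.Chain' (fun a b => b.length ≤ a.length)

/-- The reading of the canonical (highest weight) tableau whose columns have
the given heights: the column of height `h` is `1 2 ⋯ h`. -/
def canonWord (hs : List ℕ) : List ℤ :=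
  (hs.map fun h => (List.range h).map fun j => (j : ℤ) + 1).reverse.flatten

/-- An orthogonal tableau of type `B`: a tabloid whose reading lies in the
connected component `B(v_λ)` of the canonical highest weight vertex of its
shape. -/
def IsOrthTabB (n : ℕ) (T : List (List ℤ)) : Prop :=
  IsTabloidB n T ∧ Conn n (readT T) (canonWord (T.map List.length))

/-- Crystal operator `f̃_i` on the vector crystal of `U_q(so_{2n})` (type `D`,
letters of `D_n` encoded as nonzero integers). -/
def vFD (n i : ℕ) (x : ℤ) : Option ℤ :=
  if i < n then
    if x = (i : ℤ) then some ((i : ℤ) + 1)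
    else if x = -((i : ℤ) + 1) then some (-(i : ℤ)) else none
  else
    if x = (n : ℤ) - 1 then some (-(n : ℤ))
    else if x = (n : ℤ) then some (-((n : ℤ) - 1)) else none

/-- `ε_i` on the vector crystal of type `D`. -/
def vEpsD (n i : ℕ) (x : ℤ) : ℕ :=
  if i < n then (if x = (i : ℤ) + 1 ∨ x = -(i : ℤ) then 1 else 0)
  else (if x = -(n : ℤ) ∨ x = -((n : ℤ) - 1) then 1 else 0)

/-- `φ_i` on the vector crystal of type `D`. -/
def vPhiD (n i : ℕ) (x : ℤ) : ℕ :=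
  if i < n then (if x = (i : ℤ) ∨ x = -((i : ℤ) + 1) then 1 else 0)
  else (if x = (n : ℤ) - 1 ∨ x = (n : ℤ) then 1 else 0)

/-- `ε_i` of a word of type `D`, via the tensor rule. -/
def wEpsD (n i : ℕ) : List ℤ → ℕ
  | [] => 0
  | x :: w => if vPhiD n i x < wEpsD n i w then wEpsD n i w + vEpsD n i x - vPhiD n i x
              else vEpsD n i x

/-- `f̃_i` on words of type `D` (the crystal `G_n^D` of `⊕_l (V_n^D)^{⊗l}`). -/
def wFD (n i : ℕ) : List ℤ → Option (List ℤ)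
  | [] => none
  | x :: w => if wEpsD n i w < vPhiD n i x then (vFD n i x).map (· :: w)
              else (wFD n i w).map (x :: ·)

/-- Two words lie in the same connected component of the crystal of words of
type `D`. -/
def ConnD (n : ℕ) : List ℤ → List ℤ → Prop :=
  Relation.EqvGen (fun a b => ∃ i : ℕ, 1 ≤ i ∧ i ≤ n ∧ wFD n i a = some b)


section Generic

variable (eps phi : ℤ → ℕ) (f : ℤ → Option ℤ)

/-- generic `ε` via tensor rule -/
def gEps : List ℤ → ℕ
  | [] => 0
  | x :: w => if phi x < gEps w then gEps w + eps x - phi x else eps x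

/-- generic `φ` via tensor rule -/
def gPhi : List ℤ → ℕ
  | [] => 0
  | x :: w => if gEps eps phi w < phi x then gPhi w + phi x - gEps eps phi w else gPhi w

/-- generic `f̃` via tensor rule -/
def gF : List ℤ → Option (List ℤ)
  | [] => none
  | x :: w => if gEps eps phi w < phi x then (f x).map (· :: w) else (gF w).map (x :: ·)

lemma gEps_gPhi_append (u v : List ℤ) :
    (gEps eps phi (u ++ v) =
      if gPhi eps phi u < gEps eps phi v then
        gEps eps phi v + gEps eps phi u - gPhi eps phi u else gEps eps phi u) ∧
    (gPhi eps phi (u ++ v) =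
      if gEps eps phi v < gPhi eps phi u then
        gPhi eps phi v + gPhi eps phi u - gEps eps phi v else gPhi eps phi v) := by
  induction u with
  | nil =>
    have e1 : gPhi eps phi [] = 0 := rfl
    have e2 : gEps eps phi [] = 0 := rfl
    rw [List.nil_append]
    constructor <;> split_ifs <;> omega
  | cons x u ih =>
    obtain ⟨ih1, ih2⟩ := ih
    constructor
    · simp only [List.cons_append, gEps, gPhi, List.append_eq, ih1, ih2]
      split_ifs <;> omega
    · simp only [List.cons_append, gEps, gPhi, List.append_eq, ih1, ih2]
      split_ifs <;> omega

lemma gF_append (u v : List ℤ) :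
    gF eps phi f (u ++ v) =
      if gEps eps phi v < gPhi eps phi u then (gF eps phi f u).map (· ++ v)
      else (gF eps phi f v).map (u ++ ·) := by
  induction u with
  | nil =>
    simp [gF, gPhi]
  | cons x u ih =>
    have h1 := (gEps_gPhi_append eps phi u v).1
    simp only [List.cons_append, gF, gEps, gPhi, List.append_eq, ih, h1]
    split_ifs <;>
      first
        | omega
        | (exfalso; omega)
        | (cases f x <;> simp [Function.comp] <;> done)
        | (cases gF eps phi f u <;> simp [Function.comp] <;> done)
        | (cases gF eps phi f v <;> simp [Function.comp] <;> done)

lemma gF_length : ∀ w w', gF eps phi f w = some w' → w'.length = w.length := by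
  intro w
  induction w with
  | nil => intro w' h; simp [gF] at h
  | cons x w ih =>
    intro w' h
    simp only [gF] at h
    split_ifs at h
    · obtain ⟨y, _, rfl⟩ := Option.map_eq_some_iff.mp h
      simp
    · obtain ⟨y, hy, rfl⟩ := Option.map_eq_some_iff.mp h
      simp [ih y hy]

lemma gF_split (u v w : List ℤ) (h : gF eps phi f (u ++ v) = some w) :
    (∃ u', gF eps phi f u = some u' ∧ w = u' ++ v) ∨
    (∃ v', gF eps phi f v = some v' ∧ w = u ++ v') := by
  rw [gF_append] at h
  split_ifs at h
  · obtain ⟨u', hu', rfl⟩ := Option.map_eq_some_iff.mp h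
    exact Or.inl ⟨u', hu', rfl⟩
  · obtain ⟨v', hv', rfl⟩ := Option.map_eq_some_iff.mp h
    exact Or.inr ⟨v', hv', rfl⟩

end Generic

lemma take_drop_helper (p q : List ℤ) (k : ℕ) (h1 : p.length ≤ k)
    (h2 : p.length < k → q = []) :
    (p ++ q).take k = p ∧ (p ++ q).drop k = q := by
  rcases lt_or_eq_of_le h1 with h | h
  · obtain rfl := h2 h
    simp [List.take_of_length_le, List.drop_eq_nil_of_le, h1, le_of_lt h]
  · subst h
    simp

lemma conn_take_drop {n : ℕ} (F : ℕ → List ℤ → Option (List ℤ))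
    (hlen : ∀ i a b, F i a = some b → b.length = a.length)
    (hsplit : ∀ i u v w, F i (u ++ v) = some w →
      (∃ u', F i u = some u' ∧ w = u' ++ v) ∨ (∃ v', F i v = some v' ∧ w = u ++ v'))
    (k : ℕ) (a b : List ℤ)
    (h : Relation.EqvGen (fun a b => ∃ i : ℕ, 1 ≤ i ∧ i ≤ n ∧ F i a = some b) a b) :
    Relation.EqvGen (fun a b => ∃ i : ℕ, 1 ≤ i ∧ i ≤ n ∧ F i a = some b) (a.take k) (b.take k) ∧
    Relation.EqvGen (fun a b => ∃ i : ℕ, 1 ≤ i ∧ i ≤ n ∧ F i a = some b) (a.drop k) (b.drop k) := by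
  induction h with
  | rel a b hab =>
    obtain ⟨i, hi1, hi2, hF⟩ := hab
    rw [← List.take_append_drop k a] at hF
    rcases hsplit i _ _ _ hF with ⟨u', hu', rfl⟩ | ⟨v', hv', rfl⟩
    · have hl : u'.length = (a.take k).length := hlen i _ _ hu'
      have h1 : u'.length ≤ k := by simp [hl]
      have h2 : u'.length < k → a.drop k = [] := by
        intro hlt
        rw [hl, List.length_take] at hlt
        exact List.drop_eq_nil_of_le (by omega)
      obtain ⟨ht, hd⟩ := take_drop_helper u' (a.drop k) k h1 h2
      rw [ht, hd]
      exact ⟨Relation.EqvGen.rel _ _ ⟨i, hi1, hi2, hu'⟩, Relation.EqvGen.refl _⟩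
    · have hl : v'.length = (a.drop k).length := hlen i _ _ hv'
      have h1 : (a.take k).length ≤ k := by simp
      have h2 : (a.take k).length < k → v' = [] := by
        intro hlt
        rw [List.length_take] at hlt
        have : v'.length = 0 := by rw [hl, List.length_drop]; omega
        exact List.length_eq_zero_iff.mp this
      obtain ⟨ht, hd⟩ := take_drop_helper (a.take k) v' k h1 h2
      rw [ht, hd]
      exact ⟨Relation.EqvGen.refl _, Relation.EqvGen.rel _ _ ⟨i, hi1, hi2, hv'⟩⟩
  | refl a => exact ⟨Relation.EqvGen.refl _, Relation.EqvGen.refl _⟩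
  | symm a b _ ih => exact ⟨(ih.1).symm _ _, (ih.2).symm _ _⟩
  | trans a b c _ _ ih1 ih2 => exact ⟨(ih1.1).trans _ _ _ (ih2.1), (ih1.2).trans _ _ _ (ih2.2)⟩

section Inst

lemma wEps_eq (n i : ℕ) : ∀ w, wEps n i w = gEps (vEps n i) (vPhi n i) w
  | [] => rfl
  | x :: w => by simp only [wEps, gEps, wEps_eq n i w]

lemma wF_eq (n i : ℕ) : ∀ w, wF n i w = gF (vEps n i) (vPhi n i) (vF n i) w
  | [] => rfl
  | x :: w => by simp only [wF, gF, wEps_eq, wF_eq n i w]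

lemma wEpsD_eq (n i : ℕ) : ∀ w, wEpsD n i w = gEps (vEpsD n i) (vPhiD n i) w
  | [] => rfl
  | x :: w => by simp only [wEpsD, gEps, wEpsD_eq n i w]

lemma wFD_eq (n i : ℕ) : ∀ w, wFD n i w = gF (vEpsD n i) (vPhiD n i) (vFD n i) w
  | [] => rfl
  | x :: w => by simp only [wFD, gF, wEpsD_eq, wFD_eq n i w]

end Inst
/-- coplactic lemma.  If `w₁ = u₁v₁` and `w₂ = u₂v₂` with
`l(u₁) = l(u₂)` and `l(v₁) = l(v₂)` lie in the same connected component of the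
crystal graph `G_n` (of type `B` or of type `D`), then `u₁, u₂` lie in the
same connected component, and so do `v₁, v₂`. -/
theorem stmt18 (n : ℕ) (u₁ v₁ u₂ v₂ : List ℤ)
    (hu : u₁.length = u₂.length) (hv : v₁.length = v₂.length) :
    (Conn n (u₁ ++ v₁) (u₂ ++ v₂) → Conn n u₁ u₂ ∧ Conn n v₁ v₂) ∧
    (ConnD n (u₁ ++ v₁) (u₂ ++ v₂) → ConnD n u₁ u₂ ∧ ConnD n v₁ v₂) := by
  constructor
  · intro h
    have hlenB : ∀ i a b, wF n i a = some b → b.length = a.length := by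
      intro i a b hab
      rw [wF_eq] at hab
      exact gF_length _ _ _ _ _ hab
    have hsplitB : ∀ i u v w, wF n i (u ++ v) = some w →
        (∃ u', wF n i u = some u' ∧ w = u' ++ v) ∨
        (∃ v', wF n i v = some v' ∧ w = u ++ v') := by
      intro i u v w hw
      rw [wF_eq] at hw
      rcases gF_split _ _ _ _ _ _ hw with ⟨u', hu', rfl⟩ | ⟨v', hv', rfl⟩
      · exact Or.inl ⟨u', by rw [wF_eq]; exact hu', rfl⟩
      · exact Or.inr ⟨v', by rw [wF_eq]; exact hv', rfl⟩
    obtain ⟨h1, h2⟩ := conn_take_drop (fun i => wF n i) hlenB hsplitB u₁.length _ _ h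
    rw [List.take_left, hu, List.take_left] at h1
    rw [List.drop_left, hu, List.drop_left] at h2
    exact ⟨h1, h2⟩
  · intro h
    have hlenD : ∀ i a b, wFD n i a = some b → b.length = a.length := by
      intro i a b hab
      rw [wFD_eq] at hab
      exact gF_length _ _ _ _ _ hab
    have hsplitD : ∀ i u v w, wFD n i (u ++ v) = some w →
        (∃ u', wFD n i u = some u' ∧ w = u' ++ v) ∨
        (∃ v', wFD n i v = some v' ∧ w = u ++ v') := by
      intro i u v w hw
      rw [wFD_eq] at hw
      rcases gF_split _ _ _ _ _ _ hw with ⟨u', hu', rfl⟩ | ⟨v', hv', rfl⟩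
      · exact Or.inl ⟨u', by rw [wFD_eq]; exact hu', rfl⟩
      · exact Or.inr ⟨v', by rw [wFD_eq]; exact hv', rfl⟩
    obtain ⟨h1, h2⟩ := conn_take_drop (fun i => wFD n i) hlenD hsplitD u₁.length _ _ h
    rw [List.take_left, hu, List.take_left] at h1
    rw [List.drop_left, hu, List.drop_left] at h2
    exact ⟨h1, h2⟩
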